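/- As the number of insertions M → ∞, the KL divergence between the insertion-noised distribution p(X | X₀, M) and the i.i.d. product distribution q over sequences of length L+M vanishes: KL(p(·|X₀,M) ‖ π^{⊗(L+M)}) → 0. -/

import Mathlib

open Finset Filter

/-- Number of subsequence embeddings of `X₀` into `X`. -/
noncomputable def ali {B : Type*} {L N : ℕ} (X₀ : Fin L → B) (X : Fin N → B) : ℕ :=
  Nat.card {f : Fin L → Fin N // StrictMono f ∧ ∀ i, X (f i) = X₀ i}

open Classical in
/-- Classical real-valued indicator of a proposition. -/
private noncomputable def indR (P : Prop) : ℝ := if P then 1 else 0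

private lemma indR_eq_ite (P : Prop) [Decidable P] : indR P = if P then 1 else 0 := by
  by_cases h : P <;> simp [indR, h]

private lemma indR_pos {P : Prop} (h : P) : indR P = 1 := by simp [indR, h]

private lemma indR_neg {P : Prop} (h : ¬ P) : indR P = 0 := by simp [indR, h]

private lemma indR_nonneg (P : Prop) : 0 ≤ indR P := by
  rcases Classical.em P with h | h <;> simp [indR_pos, indR_neg, h]

private lemma indR_le_one (P : Prop) : indR P ≤ 1 := by
  rcases Classical.em P with h | h <;> simp [indR_pos, indR_neg, h]

private lemma indR_mul (P Q : Prop) : indR (P ∧ Q) = indR P * indR Q := by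
  rcases Classical.em P with hP | hP <;> rcases Classical.em Q with hQ | hQ <;>
    simp [indR_pos, indR_neg, hP, hQ]

private lemma sum_indR {α : Type*} [Fintype α] (p : α → Prop) [DecidablePred p] :
    ∑ x : α, indR (p x) = ((univ.filter p).card : ℝ) := by
  rw [← Finset.sum_boole]
  exact Finset.sum_congr rfl (fun x _ => indR_eq_ite _)

private lemma prod_indR {α : Type*} [Fintype α] (p : α → Prop) :
    ∏ x : α, indR (p x) = indR (∀ x, p x) := by
  classical
  simp only [indR_eq_ite]
  exact Fintype.prod_boole

section Aux

variable {B : Type*} [Fintype B] {π : B → ℝ}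

private lemma margin_aux {ι : Type*} [Fintype ι] {N : ℕ}
    (hπ1 : ∑ b, π b = 1) {h : ι → Fin N} (hinj : Function.Injective h) (a : ι → B) :
    ∑ X : Fin N → B, indR (∀ i, X (h i) = a i) * ∏ j, π (X j)
      = ∏ i, π (a i) := by
  classical
  have key : ∀ X : Fin N → B,
      indR (∀ i, X (h i) = a i) * ∏ j, π (X j)
        = ∏ j, (π (X j) *
            ∏ i ∈ univ.filter (fun i => h i = j), indR (X j = a i)) := by
    intro X
    rw [Finset.prod_mul_distrib, mul_comm]
    congr 1
    have hc : ∀ j, ∀ i ∈ univ.filter (fun i => h i = j),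
        indR (X j = a i) = indR (X (h i) = a i) := by
      intro j i hi
      rw [(mem_filter.1 hi).2]
    rw [Finset.prod_congr rfl (fun j _ => Finset.prod_congr rfl (hc j))]
    rw [Finset.prod_fiberwise univ h (fun i => indR (X (h i) = a i))]
    rw [prod_indR]
  calc ∑ X : Fin N → B, indR (∀ i, X (h i) = a i) * ∏ j, π (X j)
      = ∑ X : Fin N → B, ∏ j, (π (X j) *
          ∏ i ∈ univ.filter (fun i => h i = j), indR (X j = a i)) :=
        Finset.sum_congr rfl (fun X _ => key X)
    _ = ∏ j, ∑ b, (π b * ∏ i ∈ univ.filter (fun i => h i = j), indR (b = a i)) := by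
        rw [Finset.prod_univ_sum (fun _ : Fin N => (univ : Finset B))]
        rw [Fintype.piFinset_univ]
    _ = ∏ j, ∏ i ∈ univ.filter (fun i => h i = j), π (a i) := by
        refine Finset.prod_congr rfl (fun j _ => ?_)
        rcases (univ.filter (fun i => h i = j)).eq_empty_or_nonempty with he | ⟨i₀, hi₀⟩
        · simp [he, hπ1]
        · have hsing : univ.filter (fun i => h i = j) = {i₀} := by
            refine Finset.eq_singleton_iff_unique_mem.2 ⟨hi₀, fun i hi => ?_⟩
            exact hinj (by rw [(mem_filter.1 hi).2, (mem_filter.1 hi₀).2])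
          simp [hsing, indR_eq_ite, mul_ite, mul_one, mul_zero]
    _ = ∏ i, π (a i) := Finset.prod_fiberwise univ h (fun i => π (a i))

private lemma sum_q {N : ℕ} (hπ1 : ∑ b, π b = 1) :
    ∑ X : Fin N → B, ∏ j, π (X j) = 1 := by
  classical
  have h := Finset.prod_univ_sum (fun _ : Fin N => (univ : Finset B)) (fun _ b => π b)
  rw [Fintype.piFinset_univ] at h
  rw [← h, hπ1, Finset.prod_const_one]

end Aux

private lemma count_strictMono {N L : ℕ} (T : Finset (Fin N)) :
    (univ.filter fun f : Fin L → Fin N => StrictMono f ∧ ∀ i, f i ∈ T).card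
      = T.card.choose L := by
  classical
  rw [← Finset.card_powersetCard L T]
  apply Finset.card_bij (fun f _ => Finset.image f univ)
  · intro f hf
    obtain ⟨hmono, hmem⟩ := (mem_filter.1 hf).2
    rw [Finset.mem_powersetCard]
    refine ⟨fun x hx => ?_, ?_⟩
    · obtain ⟨i, _, rfl⟩ := Finset.mem_image.1 hx
      exact hmem i
    · rw [Finset.card_image_of_injective _ hmono.injective, card_univ, Fintype.card_fin]
  · intro f hf g hg hfg
    obtain ⟨hf1, _⟩ := (mem_filter.1 hf).2
    obtain ⟨hg1, _⟩ := (mem_filter.1 hg).2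
    have hc : (Finset.image f univ).card = L := by
      rw [Finset.card_image_of_injective _ hf1.injective, card_univ, Fintype.card_fin]
    have e1 := Finset.orderEmbOfFin_unique hc
      (fun x => Finset.mem_image_of_mem f (mem_univ x)) hf1
    have e2 := Finset.orderEmbOfFin_unique hc
      (f := g) (fun x => hfg ▸ Finset.mem_image_of_mem g (mem_univ x)) hg1
    rw [e2]; exact e1
  · intro t ht
    rw [Finset.mem_powersetCard] at ht
    obtain ⟨hsub, hcard⟩ := ht
    have hstrict : StrictMono (t.orderEmbOfFin hcard) := (t.orderEmbOfFin hcard).strictMono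
    refine ⟨t.orderEmbOfFin hcard, ?_, ?_⟩
    · rw [mem_filter]
      exact ⟨mem_univ _, hstrict, fun i => hsub (Finset.orderEmbOfFin_mem t hcard i)⟩
    · apply Finset.eq_of_subset_of_card_le
      · intro x hx
        obtain ⟨i, _, rfl⟩ := Finset.mem_image.1 hx
        exact Finset.orderEmbOfFin_mem t hcard i
      · rw [Finset.card_image_of_injective _ hstrict.injective, card_univ, Fintype.card_fin,
          hcard]

private lemma card_SM {L M : ℕ} :
    ((univ.filter fun g : Fin L → Fin (L + M) => StrictMono g).card : ℕ)
      = (L + M).choose L := by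
  classical
  have he : (univ.filter fun g : Fin L → Fin (L + M) => StrictMono g)
      = univ.filter fun g => StrictMono g ∧ ∀ i, g i ∈ (univ : Finset (Fin (L + M))) :=
    Finset.filter_congr (fun g _ => by simp)
  rw [he, count_strictMono, card_univ, Fintype.card_fin]

private lemma ali_cast {B : Type*} [Fintype B] {L N : ℕ}
    (X₀ : Fin L → B) (X : Fin N → B) :
    (ali X₀ X : ℝ)
      = ∑ f : Fin L → Fin N, indR (StrictMono f ∧ ∀ i, X (f i) = X₀ i) := by
  classical
  rw [ali, Nat.card_eq_fintype_card, Fintype.card_subtype,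
    sum_indR (fun f : Fin L → Fin N => StrictMono f ∧ ∀ i, X (f i) = X₀ i)]

section Core
variable {B : Type*} [Fintype B] {π : B → ℝ}

private lemma sum_ali_mul (hπ1 : ∑ b, π b = 1) {L M : ℕ} (X₀ : Fin L → B) :
    ∑ X : Fin (L + M) → B, (ali X₀ X : ℝ) * ∏ j, π (X j)
      = (((L + M).choose L : ℝ)) * ∏ i, π (X₀ i) := by
  classical
  calc ∑ X : Fin (L + M) → B, (ali X₀ X : ℝ) * ∏ j, π (X j)
      = ∑ X : Fin (L + M) → B, ∑ f : Fin L → Fin (L + M),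
          indR (StrictMono f) * (indR (∀ i, X (f i) = X₀ i) * ∏ j, π (X j)) := by
        refine Finset.sum_congr rfl (fun X _ => ?_)
        rw [ali_cast, Finset.sum_mul]
        exact Finset.sum_congr rfl (fun f _ => by rw [indR_mul]; ring)
    _ = ∑ f : Fin L → Fin (L + M), indR (StrictMono f) *
          ∑ X : Fin (L + M) → B, indR (∀ i, X (f i) = X₀ i) * ∏ j, π (X j) := by
        rw [Finset.sum_comm]
        exact Finset.sum_congr rfl (fun f _ => by rw [Finset.mul_sum])
    _ = ∑ f : Fin L → Fin (L + M), indR (StrictMono f) * ∏ i, π (X₀ i) := by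
        refine Finset.sum_congr rfl (fun f _ => ?_)
        by_cases hf : StrictMono f
        · rw [margin_aux hπ1 hf.injective X₀]
        · rw [indR_neg hf, zero_mul, zero_mul]
    _ = (((L + M).choose L : ℝ)) * ∏ i, π (X₀ i) := by
        rw [← Finset.sum_mul, sum_indR, card_SM]

private lemma boundW (hπpos : ∀ b, 0 < π b) (hπ1 : ∑ b, π b = 1) {L M : ℕ}
    (X₀ : Fin L → B) (c : ℝ) (hc : ∀ b, 1 ≤ c * π b)
    {f g : Fin L → Fin (L + M)} (hf : Function.Injective f) (hg : Function.Injective g) :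
    ∑ X : Fin (L + M) → B,
        indR (∀ i, X (f i) = X₀ i) * indR (∀ i, X (g i) = X₀ i) * ∏ j, π (X j)
      ≤ (∏ i, π (X₀ i)) ^ 2 * (indR (∀ i i', f i' ≠ g i) * 1
          + indR (¬ ∀ i i', f i' ≠ g i) * c ^ L) := by
  classical
  have hP0 : 0 < ∏ i, π (X₀ i) := Finset.prod_pos fun i _ => hπpos _
  by_cases hd : ∀ i i', f i' ≠ g i
  · rw [indR_pos hd, indR_neg (P := ¬ ∀ i i', f i' ≠ g i) (not_not_intro hd), one_mul,
      zero_mul, add_zero, mul_one]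
    refine le_of_eq ?_
    have hinj : Function.Injective (Sum.elim f g) := by
      rintro (x | x) (y | y) hxy
      · rw [hf hxy]
      · exact absurd hxy (hd y x)
      · exact absurd hxy.symm (hd x y)
      · rw [hg hxy]
    have hm := margin_aux (π := π) hπ1 hinj (Sum.elim X₀ X₀)
    have hcond : ∀ X : Fin (L + M) → B,
        indR (∀ i, X (f i) = X₀ i) * indR (∀ i, X (g i) = X₀ i)
        = indR (∀ s : Fin L ⊕ Fin L, X (Sum.elim f g s) = Sum.elim X₀ X₀ s) := by
      intro X
      rw [← indR_mul]
      rcases Classical.em ((∀ i, X (f i) = X₀ i) ∧ (∀ i, X (g i) = X₀ i)) with h | h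
      · rw [indR_pos h, indR_pos]
        rintro (i | i)
        · exact h.1 i
        · exact h.2 i
      · rw [indR_neg h, indR_neg]
        intro hall
        exact h ⟨fun i => hall (Sum.inl i), fun i => hall (Sum.inr i)⟩
    calc ∑ X : Fin (L + M) → B,
          indR (∀ i, X (f i) = X₀ i) * indR (∀ i, X (g i) = X₀ i) * ∏ j, π (X j)
        = ∑ X : Fin (L + M) → B,
            indR (∀ s : Fin L ⊕ Fin L, X (Sum.elim f g s) = Sum.elim X₀ X₀ s) *
              ∏ j, π (X j) :=
          Finset.sum_congr rfl (fun X _ => by rw [hcond X])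
      _ = ∏ s : Fin L ⊕ Fin L, π (Sum.elim X₀ X₀ s) := hm
      _ = (∏ i, π (X₀ i)) ^ 2 := by
          rw [Fintype.prod_sum_type]
          simp [sq]
  · rw [indR_neg (P := ∀ i i', f i' ≠ g i) hd, indR_pos (P := ¬ ∀ i i', f i' ≠ g i) hd,
      zero_mul, zero_add, one_mul]
    have h1 : ∑ X : Fin (L + M) → B,
        indR (∀ i, X (f i) = X₀ i) * indR (∀ i, X (g i) = X₀ i) * ∏ j, π (X j)
        ≤ ∑ X : Fin (L + M) → B, indR (∀ i, X (f i) = X₀ i) * ∏ j, π (X j) := by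
      refine Finset.sum_le_sum (fun X _ => ?_)
      have hq : 0 ≤ ∏ j, π (X j) := le_of_lt (Finset.prod_pos fun j _ => hπpos _)
      have h2 : indR (∀ i, X (g i) = X₀ i) ≤ 1 := indR_le_one _
      have h3 : 0 ≤ indR (∀ i, X (f i) = X₀ i) := indR_nonneg _
      have h4 : 0 ≤ indR (∀ i, X (g i) = X₀ i) := indR_nonneg _
      calc indR (∀ i, X (f i) = X₀ i) * indR (∀ i, X (g i) = X₀ i) * ∏ j, π (X j)
          = (indR (∀ i, X (f i) = X₀ i) * ∏ j, π (X j)) * indR (∀ i, X (g i) = X₀ i) := by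
            ring
        _ ≤ (indR (∀ i, X (f i) = X₀ i) * ∏ j, π (X j)) * 1 :=
            mul_le_mul_of_nonneg_left h2 (mul_nonneg h3 hq)
        _ = indR (∀ i, X (f i) = X₀ i) * ∏ j, π (X j) := mul_one _
    rw [margin_aux (π := π) hπ1 hf X₀] at h1
    have h3 : (1:ℝ) ≤ (∏ i, π (X₀ i)) * c ^ L := by
      calc (1:ℝ) = ∏ _i : Fin L, (1:ℝ) := Finset.prod_const_one.symm
        _ ≤ ∏ i : Fin L, (c * π (X₀ i)) :=
            Finset.prod_le_prod (fun i _ => zero_le_one) (fun i _ => hc (X₀ i))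
        _ = (∏ i, π (X₀ i)) * c ^ L := by
          rw [Finset.prod_mul_distrib, Finset.prod_const, card_univ, Fintype.card_fin]
          ring
    nlinarith [hP0, h1, h3]

private lemma inner_count {L M : ℕ} {f : Fin L → Fin (L + M)} (hf : Function.Injective f)
    (c : ℝ) :
    ∑ g : Fin L → Fin (L + M),
        indR (StrictMono g) * (indR (∀ i i', f i' ≠ g i) * 1
          + indR (¬ ∀ i i', f i' ≠ g i) * c ^ L)
      = (M.choose L : ℝ) + c ^ L * (((L + M).choose L : ℝ) - (M.choose L : ℝ)) := by
  classical
  have hsplit : ∀ g : Fin L → Fin (L + M),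
      indR (StrictMono g) * (indR (∀ i i', f i' ≠ g i) * 1
          + indR (¬ ∀ i i', f i' ≠ g i) * c ^ L)
        = indR (StrictMono g ∧ ∀ i i', f i' ≠ g i)
          + c ^ L * indR (StrictMono g ∧ ¬ ∀ i i', f i' ≠ g i) := by
    intro g
    rw [indR_mul, indR_mul]
    by_cases h2 : ∀ i i', f i' ≠ g i
    · rw [indR_pos h2, indR_neg (P := ¬ ∀ i i', f i' ≠ g i) (not_not_intro h2)]
      ring
    · rw [indR_neg (P := ∀ i i', f i' ≠ g i) h2, indR_pos (P := ¬ ∀ i i', f i' ≠ g i) h2]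
      ring
  rw [Finset.sum_congr rfl (fun g _ => hsplit g), Finset.sum_add_distrib, ← Finset.mul_sum,
    sum_indR, sum_indR]
  have hA : (univ.filter fun g : Fin L → Fin (L + M) =>
      StrictMono g ∧ ∀ i i', f i' ≠ g i).card = M.choose L := by
    have he : (univ.filter fun g : Fin L → Fin (L + M) => StrictMono g ∧ ∀ i i', f i' ≠ g i)
        = univ.filter fun g => StrictMono g ∧ ∀ i, g i ∈ (univ.image f)ᶜ := by
      refine Finset.filter_congr (fun g _ => ?_)
      simp only [Finset.mem_compl, Finset.mem_image, mem_univ, true_and, not_exists]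
    rw [he, count_strictMono, Finset.card_compl, Finset.card_image_of_injective _ hf,
      card_univ, Fintype.card_fin, Fintype.card_fin]
    congr 1
    omega
  have hsum : (univ.filter fun g : Fin L → Fin (L + M) =>
        StrictMono g ∧ ∀ i i', f i' ≠ g i).card
      + (univ.filter fun g : Fin L → Fin (L + M) =>
        StrictMono g ∧ ¬ ∀ i i', f i' ≠ g i).card
      = (L + M).choose L := by
    rw [← card_SM (L := L) (M := M), ← Finset.filter_filter, ← Finset.filter_filter]
    exact Finset.card_filter_add_card_filter_not
      (p := fun g : Fin L → Fin (L + M) => ∀ i i', f i' ≠ g i)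
  have hBcard : ((univ.filter fun g : Fin L → Fin (L + M) =>
      StrictMono g ∧ ¬ ∀ i i', f i' ≠ g i).card : ℝ)
      = ((L + M).choose L : ℝ) - (M.choose L : ℝ) := by
    have hcast := congrArg (fun n : ℕ => (n : ℝ)) hsum
    push_cast at hcast
    rw [hA] at hcast
    push_cast
    linarith
  rw [hA, hBcard]

private lemma chi_bound (hπpos : ∀ b, 0 < π b) (hπ1 : ∑ b, π b = 1) {L M : ℕ}
    (X₀ : Fin L → B) (c : ℝ) (hc : ∀ b, 1 ≤ c * π b) :
    ∑ X : Fin (L + M) → B, (ali X₀ X : ℝ) ^ 2 * ∏ j, π (X j)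
      ≤ (((L + M).choose L : ℝ)) * (∏ i, π (X₀ i)) ^ 2 *
          ((M.choose L : ℝ) + c ^ L * (((L + M).choose L : ℝ) - (M.choose L : ℝ))) := by
  classical
  have step1 : ∀ X : Fin (L + M) → B, (ali X₀ X : ℝ) ^ 2 * ∏ j, π (X j)
      = ∑ f : Fin L → Fin (L + M), ∑ g : Fin L → Fin (L + M),
          indR (StrictMono f) * indR (StrictMono g) *
            (indR (∀ i, X (f i) = X₀ i) * indR (∀ i, X (g i) = X₀ i) * ∏ j, π (X j)) := by
    intro X
    rw [ali_cast, sq, Finset.sum_mul_sum, Finset.sum_mul]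
    refine Finset.sum_congr rfl (fun f _ => ?_)
    rw [Finset.sum_mul]
    refine Finset.sum_congr rfl (fun g _ => ?_)
    rw [indR_mul, indR_mul]
    ring
  rw [Finset.sum_congr rfl (fun X _ => step1 X)]
  rw [Finset.sum_comm]
  have step2 : ∀ f : Fin L → Fin (L + M),
      ∑ X : Fin (L + M) → B, ∑ g : Fin L → Fin (L + M),
          indR (StrictMono f) * indR (StrictMono g) *
            (indR (∀ i, X (f i) = X₀ i) * indR (∀ i, X (g i) = X₀ i) * ∏ j, π (X j))
        = ∑ g : Fin L → Fin (L + M), indR (StrictMono f) * indR (StrictMono g) *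
            ∑ X : Fin (L + M) → B,
              indR (∀ i, X (f i) = X₀ i) * indR (∀ i, X (g i) = X₀ i) * ∏ j, π (X j) := by
    intro f
    rw [Finset.sum_comm]
    exact Finset.sum_congr rfl (fun g _ => by rw [Finset.mul_sum])
  rw [Finset.sum_congr rfl (fun f _ => step2 f)]
  have key : ∀ f g : Fin L → Fin (L + M),
      indR (StrictMono f) * indR (StrictMono g) *
          ∑ X : Fin (L + M) → B,
            indR (∀ i, X (f i) = X₀ i) * indR (∀ i, X (g i) = X₀ i) * ∏ j, π (X j)
        ≤ indR (StrictMono f) * indR (StrictMono g) *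
            ((∏ i, π (X₀ i)) ^ 2 * (indR (∀ i i', f i' ≠ g i) * 1
              + indR (¬ ∀ i i', f i' ≠ g i) * c ^ L)) := by
    intro f g
    by_cases hf : StrictMono f
    · by_cases hg : StrictMono g
      · rw [indR_pos hf, indR_pos hg]
        simpa using boundW hπpos hπ1 X₀ c hc hf.injective hg.injective
      · rw [indR_neg hg]
        simp
    · rw [indR_neg hf]
      simp
  calc ∑ f : Fin L → Fin (L + M), ∑ g : Fin L → Fin (L + M),
        indR (StrictMono f) * indR (StrictMono g) *
          ∑ X : Fin (L + M) → B,
            indR (∀ i, X (f i) = X₀ i) * indR (∀ i, X (g i) = X₀ i) * ∏ j, π (X j)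
      ≤ ∑ f : Fin L → Fin (L + M), ∑ g : Fin L → Fin (L + M),
          indR (StrictMono f) * indR (StrictMono g) *
            ((∏ i, π (X₀ i)) ^ 2 * (indR (∀ i i', f i' ≠ g i) * 1
              + indR (¬ ∀ i i', f i' ≠ g i) * c ^ L)) :=
        Finset.sum_le_sum (fun f _ => Finset.sum_le_sum (fun g _ => key f g))
    _ = (∏ i, π (X₀ i)) ^ 2 * ∑ f : Fin L → Fin (L + M), indR (StrictMono f) *
          ∑ g : Fin L → Fin (L + M), indR (StrictMono g) *
            (indR (∀ i i', f i' ≠ g i) * 1 + indR (¬ ∀ i i', f i' ≠ g i) * c ^ L) := by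
        rw [Finset.mul_sum]
        refine Finset.sum_congr rfl (fun f _ => ?_)
        rw [Finset.mul_sum, Finset.mul_sum]
        exact Finset.sum_congr rfl (fun g _ => by ring)
    _ = (∏ i, π (X₀ i)) ^ 2 * ∑ f : Fin L → Fin (L + M), indR (StrictMono f) *
          ((M.choose L : ℝ) + c ^ L * (((L + M).choose L : ℝ) - (M.choose L : ℝ))) := by
        congr 1
        refine Finset.sum_congr rfl (fun f _ => ?_)
        by_cases hf : StrictMono f
        · rw [inner_count hf.injective c]
        · rw [indR_neg hf, zero_mul, zero_mul]
    _ = (((L + M).choose L : ℝ)) * (∏ i, π (X₀ i)) ^ 2 *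
          ((M.choose L : ℝ) + c ^ L * (((L + M).choose L : ℝ) - (M.choose L : ℝ))) := by
        rw [← Finset.sum_mul, sum_indR, card_SM]
        ring

end Core

private lemma kl_core_lower {α : Type*} [Fintype α] (p q : α → ℝ)
    (hp : ∀ x, 0 ≤ p x) (hq : ∀ x, 0 < q x)
    (hsp : ∑ x, p x = 1) (hsq : ∑ x, q x = 1) :
    0 ≤ ∑ x, p x * Real.log (p x / q x) := by
  have hterm : ∀ x, p x - q x ≤ p x * Real.log (p x / q x) := by
    intro x
    rcases eq_or_lt_of_le (hp x) with h0 | hpx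
    · rw [← h0, zero_mul, zero_sub]
      exact neg_nonpos.2 (hq x).le
    · have hq' := hq x
      have hlog := Real.log_le_sub_one_of_pos (div_pos hq' hpx)
      have hrw : Real.log (p x / q x) = - Real.log (q x / p x) := by
        rw [← Real.log_inv, inv_div]
      rw [hrw, mul_neg]
      have h2 := mul_le_mul_of_nonneg_left hlog hpx.le
      have hqp : p x * (q x / p x - 1) = q x - p x := by field_simp
      nlinarith
  calc (0:ℝ) = ∑ x, (p x - q x) := by rw [Finset.sum_sub_distrib, hsp, hsq, sub_self]
    _ ≤ ∑ x, p x * Real.log (p x / q x) := Finset.sum_le_sum (fun x _ => hterm x)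

private lemma kl_core_upper {α : Type*} [Fintype α] (p q : α → ℝ)
    (hp : ∀ x, 0 ≤ p x) (hq : ∀ x, 0 < q x)
    (hsp : ∑ x, p x = 1) (t : ℝ)
    (hchi : ∑ x, p x ^ 2 / q x ≤ 1 + t) :
    ∑ x, p x * Real.log (p x / q x) ≤ t := by
  have hterm : ∀ x, p x * Real.log (p x / q x) ≤ p x ^ 2 / q x - p x := by
    intro x
    rcases eq_or_lt_of_le (hp x) with h0 | hpx
    · rw [← h0, zero_mul]
      simp
    · have hq' := hq x
      have hlog := Real.log_le_sub_one_of_pos (div_pos hpx hq')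
      have h2 := mul_le_mul_of_nonneg_left hlog hpx.le
      have hqp : p x * (p x / q x - 1) = p x ^ 2 / q x - p x := by field_simp
      nlinarith
  calc ∑ x, p x * Real.log (p x / q x) ≤ ∑ x, (p x ^ 2 / q x - p x) :=
        Finset.sum_le_sum (fun x _ => hterm x)
    _ = (∑ x, p x ^ 2 / q x) - 1 := by rw [Finset.sum_sub_distrib, hsp]
    _ ≤ t := by linarith

private lemma sum_p_eq_one {B : Type*} [Fintype B] {π : B → ℝ}
    (hπpos : ∀ b, 0 < π b) (hπ1 : ∑ b, π b = 1) {L M : ℕ} (X₀ : Fin L → B) :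
    ∑ X : Fin (L + M) → B,
        (((L + M).choose L : ℝ)⁻¹ * (ali X₀ X : ℝ) *
          ((∏ j, π (X j)) / ∏ i, π (X₀ i))) = 1 := by
  have hC : ((L + M).choose L : ℝ) ≠ 0 :=
    Nat.cast_ne_zero.2 (Nat.choose_pos (Nat.le_add_right L M)).ne'
  have hP : (∏ i, π (X₀ i)) ≠ 0 := ne_of_gt (Finset.prod_pos fun i _ => hπpos _)
  have h1 : ∑ X : Fin (L + M) → B,
      (((L + M).choose L : ℝ)⁻¹ * (ali X₀ X : ℝ) * ((∏ j, π (X j)) / ∏ i, π (X₀ i)))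
      = ((L + M).choose L : ℝ)⁻¹ * (∏ i, π (X₀ i))⁻¹ *
          ∑ X : Fin (L + M) → B, (ali X₀ X : ℝ) * ∏ j, π (X j) := by
    rw [Finset.mul_sum]
    exact Finset.sum_congr rfl (fun X _ => by rw [div_eq_mul_inv]; ring)
  rw [h1, sum_ali_mul hπ1 X₀]
  field_simp

private lemma ratio_tendsto (L : ℕ) :
    Tendsto (fun M : ℕ => (M.choose L : ℝ) / ((L + M).choose L)) atTop (nhds 1) := by
  have hfac : ∀ i ∈ range L, Tendsto (fun M : ℕ => 1 - (L : ℝ) / ((L : ℝ) + M - i))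
      atTop (nhds 1) := by
    intro i _
    have hd : Tendsto (fun M : ℕ => (L : ℝ) + M - i) atTop atTop := by
      have h1 : Tendsto (fun M : ℕ => (M : ℝ)) atTop atTop := tendsto_natCast_atTop_atTop
      have h2 := tendsto_atTop_add_const_left atTop (L : ℝ) h1
      have h3 := tendsto_atTop_add_const_right atTop (-(i : ℝ)) h2
      simpa [sub_eq_add_neg] using h3
    have h0 : Tendsto (fun M : ℕ => (L : ℝ) / ((L : ℝ) + M - i)) atTop (nhds 0) :=
      Tendsto.div_atTop tendsto_const_nhds hd
    simpa using tendsto_const_nhds.sub h0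
  have hprod := tendsto_finset_prod (range L) hfac
  rw [Finset.prod_const_one] at hprod
  apply hprod.congr'
  filter_upwards [eventually_ge_atTop L] with M hM
  have hfact : ∀ n : ℕ, L ≤ n →
      (n.choose L : ℝ) = (∏ i ∈ range L, ((n : ℝ) - i)) / (Nat.factorial L : ℝ) := by
    intro n hn
    have h1 : n.descFactorial L = Nat.factorial L * n.choose L :=
      Nat.descFactorial_eq_factorial_mul_choose n L
    have h2 : (n.descFactorial L : ℝ) = ∏ i ∈ range L, ((n : ℝ) - i) := by
      rw [Nat.descFactorial_eq_prod_range]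
      push_cast
      refine Finset.prod_congr rfl (fun i hi => ?_)
      rw [Nat.cast_sub (le_trans (le_of_lt (mem_range.1 hi)) hn)]
    have hLfac : (Nat.factorial L : ℝ) ≠ 0 := by positivity
    field_simp [← h2, h1]
    rw [← h2, h1]
    push_cast
    ring
  rw [hfact M hM, hfact (L + M) (Nat.le_add_right L M)]
  have hLfac : (Nat.factorial L : ℝ) ≠ 0 := by positivity
  rw [div_div_div_cancel_right₀ hLfac]
  rw [← Finset.prod_div_distrib]
  refine Finset.prod_congr rfl (fun i hi => ?_)
  have hiL : (i : ℝ) < L := by exact_mod_cast mem_range.1 hi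
  have hden : ((L : ℝ) + M - i) ≠ 0 := by
    nlinarith [Nat.cast_nonneg (α := ℝ) M]
  push_cast
  rw [one_sub_div hden]
  congr 1
  ring

/-- As the number of insertions `M → ∞`, the KL divergence between the
insertion-noised distribution `p(X | X₀, M) = C(L+M, L)⁻¹·ali(X₀, X)·∏π(X)/∏π(X₀)`
and the i.i.d. product distribution `q = π^⊗(L+M)` vanishes:
`KL(p(·|X₀,M) ‖ π^⊗(L+M)) → 0`. -/
theorem kl_insertion_noise_tendsto_zero
    {B : Type*} [Fintype B] (π : B → ℝ) (hπpos : ∀ b, 0 < π b) (hπ1 : ∑ b, π b = 1)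
    (L : ℕ) (X₀ : Fin L → B) :
    Tendsto (fun M : ℕ =>
      ∑ X : Fin (L + M) → B,
        (((L + M).choose L : ℝ)⁻¹ * (ali X₀ X : ℝ) *
            ((∏ j, π (X j)) / ∏ i, π (X₀ i))) *
          Real.log
            ((((L + M).choose L : ℝ)⁻¹ * (ali X₀ X : ℝ) *
                ((∏ j, π (X j)) / ∏ i, π (X₀ i))) / ∏ j, π (X j)))
      atTop (nhds 0) := by
  classical
  -- `B` is nonempty
  have hB : Nonempty B := by
    by_contra h
    rw [not_nonempty_iff] at h
    rw [Finset.univ_eq_empty, Finset.sum_empty] at hπ1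
    exact zero_ne_one hπ1
  -- the constant `c`
  obtain ⟨c, hc1, hc⟩ : ∃ c : ℝ, 1 ≤ c ∧ ∀ b, 1 ≤ c * π b := by
    have hne : (univ : Finset B).Nonempty := univ_nonempty
    set ε := univ.inf' hne π with hε
    have hεpos : 0 < ε := by
      rw [hε, Finset.lt_inf'_iff]
      exact fun b _ => hπpos b
    have hεle : ∀ b, ε ≤ π b := fun b => Finset.inf'_le π (mem_univ b)
    have hπle1 : ∀ b, π b ≤ 1 := by
      intro b
      rw [← hπ1]
      exact Finset.single_le_sum (fun b _ => (hπpos b).le) (mem_univ b)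
    have hεinv : 0 < ε⁻¹ := inv_pos.2 hεpos
    refine ⟨ε⁻¹ + 1, by nlinarith, fun b => ?_⟩
    have key : 1 ≤ ε⁻¹ * π b := by
      have h5 := mul_le_mul_of_nonneg_left (hεle b) (le_of_lt hεinv)
      rw [inv_mul_cancel₀ (ne_of_gt hεpos)] at h5
      exact h5
    nlinarith [hπpos b]
  -- positivity facts
  have hPPpos : 0 < ∏ i, π (X₀ i) := Finset.prod_pos fun i _ => hπpos _
  -- squeeze
  have hlow : ∀ M : ℕ, 0 ≤ ∑ X : Fin (L + M) → B,
      (((L + M).choose L : ℝ)⁻¹ * (ali X₀ X : ℝ) *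
          ((∏ j, π (X j)) / ∏ i, π (X₀ i))) *
        Real.log
          ((((L + M).choose L : ℝ)⁻¹ * (ali X₀ X : ℝ) *
              ((∏ j, π (X j)) / ∏ i, π (X₀ i))) / ∏ j, π (X j)) := by
    intro M
    have hC : (0:ℝ) < ((L + M).choose L : ℝ) := by
      exact_mod_cast Nat.choose_pos (Nat.le_add_right L M)
    refine kl_core_lower
      (fun X : Fin (L + M) → B => ((L + M).choose L : ℝ)⁻¹ * (ali X₀ X : ℝ) *
        ((∏ j, π (X j)) / ∏ i, π (X₀ i)))
      (fun X => ∏ j, π (X j)) (fun X => ?_) (fun X => ?_) ?_ ?_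
    · have h1 : (0:ℝ) ≤ ((L + M).choose L : ℝ)⁻¹ := by positivity
      have h2 : (0:ℝ) ≤ (ali X₀ X : ℝ) := Nat.cast_nonneg _
      have h3 : (0:ℝ) ≤ (∏ j, π (X j)) / ∏ i, π (X₀ i) := by
        apply div_nonneg <;> exact le_of_lt (Finset.prod_pos fun _ _ => hπpos _)
      positivity
    · exact Finset.prod_pos fun _ _ => hπpos _
    · exact sum_p_eq_one hπpos hπ1 X₀
    · exact sum_q hπ1
  have hup : ∀ M : ℕ, (∑ X : Fin (L + M) → B,
      (((L + M).choose L : ℝ)⁻¹ * (ali X₀ X : ℝ) *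
          ((∏ j, π (X j)) / ∏ i, π (X₀ i))) *
        Real.log
          ((((L + M).choose L : ℝ)⁻¹ * (ali X₀ X : ℝ) *
              ((∏ j, π (X j)) / ∏ i, π (X₀ i))) / ∏ j, π (X j)))
      ≤ (c ^ L - 1) * (1 - (M.choose L : ℝ) / ((L + M).choose L)) := by
    intro M
    have hC : (0:ℝ) < ((L + M).choose L : ℝ) := by
      exact_mod_cast Nat.choose_pos (Nat.le_add_right L M)
    have hqpos : ∀ X : Fin (L + M) → B, (0:ℝ) < ∏ j, π (X j) :=
      fun X => Finset.prod_pos fun _ _ => hπpos _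
    refine kl_core_upper
      (fun X : Fin (L + M) → B => ((L + M).choose L : ℝ)⁻¹ * (ali X₀ X : ℝ) *
        ((∏ j, π (X j)) / ∏ i, π (X₀ i)))
      (fun X => ∏ j, π (X j)) (fun X => ?_) hqpos (sum_p_eq_one hπpos hπ1 X₀) _ ?_
    · have h2 : (0:ℝ) ≤ (ali X₀ X : ℝ) := Nat.cast_nonneg _
      have h3 : (0:ℝ) ≤ (∏ j, π (X j)) / ∏ i, π (X₀ i) := by
        apply div_nonneg <;> exact le_of_lt (Finset.prod_pos fun _ _ => hπpos _)
      positivity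
    · -- chi-square bound
      have h1 := chi_bound (M := M) hπpos hπ1 X₀ c hc
      have h2 : ∑ X : Fin (L + M) → B,
          (((L + M).choose L : ℝ)⁻¹ * (ali X₀ X : ℝ) *
            ((∏ j, π (X j)) / ∏ i, π (X₀ i))) ^ 2 / ∏ j, π (X j)
          = (((L + M).choose L : ℝ)⁻¹) ^ 2 * ((∏ i, π (X₀ i))⁻¹) ^ 2 *
              ∑ X : Fin (L + M) → B, (ali X₀ X : ℝ) ^ 2 * ∏ j, π (X j) := by
        rw [Finset.mul_sum]
        refine Finset.sum_congr rfl (fun X _ => ?_)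
        have hqX := (hqpos X).ne'
        field_simp
      rw [h2]
      have h3 : (((L + M).choose L : ℝ)⁻¹) ^ 2 * ((∏ i, π (X₀ i))⁻¹) ^ 2 *
            ∑ X : Fin (L + M) → B, (ali X₀ X : ℝ) ^ 2 * ∏ j, π (X j)
          ≤ (((L + M).choose L : ℝ)⁻¹) ^ 2 * ((∏ i, π (X₀ i))⁻¹) ^ 2 *
            ((((L + M).choose L : ℝ)) * (∏ i, π (X₀ i)) ^ 2 *
              ((M.choose L : ℝ) + c ^ L * (((L + M).choose L : ℝ) - (M.choose L : ℝ)))) := by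
        apply mul_le_mul_of_nonneg_left h1
        positivity
      refine le_trans h3 (le_of_eq ?_)
      have hCne : ((L + M).choose L : ℝ) ≠ 0 := ne_of_gt hC
      have hPne : (∏ i, π (X₀ i)) ≠ 0 := ne_of_gt hPPpos
      field_simp
      ring
  have hlim : Tendsto (fun M : ℕ =>
      (c ^ L - 1) * (1 - (M.choose L : ℝ) / ((L + M).choose L))) atTop (nhds 0) := by
    have h1 := (tendsto_const_nhds (x := (1:ℝ)) (f := atTop (α := ℕ))).sub (ratio_tendsto L)
    rw [sub_self] at h1
    have h2 := h1.const_mul (c ^ L - 1)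
    rwa [mul_zero] at h2
  exact squeeze_zero hlow hup hlim
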